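/- Let γ be a nonnegative real random variable with cumulative distribution function F(x) = P(γ ≤ x), and let β > 0. Then the average of the Gaussian Q-function of √(β·γ) satisfies E[Q(√(β·γ))] = ∫₀^∞ √(β/(8πx)) · e^{−βx/2} · F(x) dx. -/

import Mathlib

open Real MeasureTheory ProbabilityTheory
open scoped ProbabilityTheory

/-- The Gaussian Q-function `Q(x) = ∫_x^∞ (1/√(2π)) e^{−t²/2} dt`. -/
noncomputable def gaussQ (x : ℝ) : ℝ :=
  ∫ t in Set.Ioi x, (1 / Real.sqrt (2 * Real.pi)) * Real.exp (-t ^ 2 / 2)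

open Set Filter Topology
open scoped ENNReal

noncomputable def phi (t : ℝ) : ℝ := (1 / Real.sqrt (2 * Real.pi)) * Real.exp (-t ^ 2 / 2)

lemma gaussQ_def (x : ℝ) : gaussQ x = ∫ t in Set.Ioi x, phi t := rfl

lemma phi_integrable : Integrable phi := by
  have h := (integrable_exp_neg_mul_sq (by norm_num : (0:ℝ) < 1/2)).const_mul
    (1 / Real.sqrt (2 * Real.pi))
  convert h using 2 with t
  unfold phi
  ring_nf

lemma phi_cont : Continuous phi := by
  unfold phi; fun_prop

lemma phi_nonneg (t : ℝ) : 0 ≤ phi t := by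
  unfold phi; positivity

lemma gaussQ_eq (x : ℝ) : gaussQ x = (∫ t, phi t) - ∫ t in Set.Iic x, phi t := by
  rw [eq_sub_iff_add_eq, add_comm, gaussQ_def, show Set.Ioi x = (Set.Iic x)ᶜ by simp]
  exact (integral_add_compl measurableSet_Iic phi_integrable)

lemma gaussQ_hasDerivAt (s : ℝ) : HasDerivAt gaussQ (-(phi s)) s := by
  have key : ∀ x : ℝ, gaussQ x = ((∫ t, phi t) - ∫ t in Set.Iic (0:ℝ), phi t)
      - ∫ t in (0:ℝ)..x, phi t := by
    intro x
    rw [gaussQ_eq, ← intervalIntegral.integral_Iic_sub_Iic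
      (phi_integrable.integrableOn) (phi_integrable.integrableOn)]
    ring
  have hd : HasDerivAt (fun x => ∫ t in (0:ℝ)..x, phi t) (phi s) s :=
    intervalIntegral.integral_hasDerivAt_right
      (phi_integrable.intervalIntegrable)
      (phi_cont.stronglyMeasurableAtFilter _ _) phi_cont.continuousAt
  have := (hd.const_sub ((∫ t, phi t) - ∫ t in Set.Iic (0:ℝ), phi t))
  exact this.congr_of_eventuallyEq (Filter.Eventually.of_forall fun x => (key x))

lemma gaussQ_indicator (x : ℝ) : gaussQ x = ∫ t, (Set.Ioi x).indicator phi t := by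
  rw [gaussQ_def, integral_indicator measurableSet_Ioi]

lemma gaussQ_tendsto : Tendsto gaussQ atTop (𝓝 0) := by
  have h0 : (0:ℝ) = ∫ t : ℝ, (0:ℝ) := by simp
  rw [h0]
  have main : Tendsto (fun x => ∫ t, (Set.Ioi x).indicator phi t) atTop (𝓝 (∫ t : ℝ, (0:ℝ))) := by
    refine MeasureTheory.tendsto_integral_filter_of_dominated_convergence phi
      ?_ ?_ phi_integrable ?_
    · filter_upwards with x
      exact (phi_integrable.aestronglyMeasurable.indicator measurableSet_Ioi)
    · filter_upwards with x
      filter_upwards with t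
      rw [Real.norm_eq_abs, abs_of_nonneg (Set.indicator_nonneg (fun a _ => phi_nonneg a) t)]
      exact Set.indicator_le_self' (fun a _ => phi_nonneg a) t
    · filter_upwards with t
      have : ∀ᶠ x in atTop, (Set.Ioi x).indicator phi t = 0 := by
        filter_upwards [eventually_ge_atTop t] with x hx
        simp [Set.indicator_of_notMem, hx.not_gt]
      simpa using Tendsto.congr' (this.mono fun x hx => hx.symm) tendsto_const_nhds
  exact main.congr (fun x => (gaussQ_indicator x).symm)

lemma gaussQ_cont : Continuous gaussQ :=
  continuous_iff_continuousAt.mpr fun x => (gaussQ_hasDerivAt x).continuousAt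

lemma sqrt_tendsto_atTop : Tendsto Real.sqrt atTop atTop := by
  refine (tendsto_rpow_atTop (by norm_num : (0:ℝ) < 1/2)).congr' ?_
  filter_upwards [eventually_ge_atTop (0:ℝ)] with x hx
  exact (Real.sqrt_eq_rpow x).symm

noncomputable def gfun (β x : ℝ) : ℝ := Real.sqrt (β / (8 * Real.pi * x)) * Real.exp (-(β * x) / 2)

lemma gfun_nonneg (β x : ℝ) : 0 ≤ gfun β x := by unfold gfun; positivity

lemma sqrt_key {β x : ℝ} (hβ : 0 < β) (hx : 0 < x) :
    Real.sqrt (β / (8 * Real.pi * x)) =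
      1 / Real.sqrt (2 * Real.pi) * (1 / (2 * Real.sqrt (β * x)) * β) := by
  have hβx : 0 < β * x := mul_pos hβ hx
  have h2π : Real.sqrt (2 * Real.pi) ^ 2 = 2 * Real.pi := Real.sq_sqrt (by positivity)
  have hbx : Real.sqrt (β * x) ^ 2 = β * x := Real.sq_sqrt hβx.le
  have h1 : Real.sqrt (2 * Real.pi) ≠ 0 := by positivity
  have h2 : Real.sqrt (β * x) ≠ 0 := by positivity
  rw [show β / (8 * Real.pi * x) =
      (1 / Real.sqrt (2 * Real.pi) * (1 / (2 * Real.sqrt (β * x)) * β)) ^ 2 from ?_,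
    Real.sqrt_sq (by positivity)]
  have e2 : Real.sqrt 2 ^ 2 = 2 := Real.sq_sqrt (by norm_num)
  have eπ : Real.sqrt Real.pi ^ 2 = Real.pi := Real.sq_sqrt Real.pi_pos.le
  have eβ : Real.sqrt β ^ 2 = β := Real.sq_sqrt hβ.le
  have ex : Real.sqrt x ^ 2 = x := Real.sq_sqrt hx.le
  field_simp
  rw [show Real.pi * 2 = 2 * Real.pi by ring, h2π, hbx]
  ring

lemma Gderiv {β : ℝ} (hβ : 0 < β) {x : ℝ} (hx : 0 < x) :
    HasDerivAt (fun y => -gaussQ (Real.sqrt (β * y))) (gfun β x) x := by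
  have hβx : 0 < β * x := mul_pos hβ hx
  have h1 : HasDerivAt (fun y : ℝ => β * y) β x := by simpa using (hasDerivAt_id x).const_mul β
  have h2 : HasDerivAt (fun y => Real.sqrt (β * y)) (1 / (2 * Real.sqrt (β * x)) * β) x :=
    (Real.hasDerivAt_sqrt hβx.ne').comp x h1
  have h3 := ((gaussQ_hasDerivAt (Real.sqrt (β * x))).comp x h2).neg
  refine h3.congr_deriv ?_
  rw [neg_mul, neg_neg]
  unfold gfun phi
  rw [Real.sq_sqrt hβx.le, sqrt_key hβ hx]
  ring

lemma integral_gfun {β : ℝ} (hβ : 0 < β) {y : ℝ} (hy : 0 ≤ y) :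
    IntegrableOn (gfun β) (Set.Ioi y) ∧
      ∫ x in Set.Ioi y, gfun β x = gaussQ (Real.sqrt (β * y)) := by
  have hcont : Continuous (fun y => -gaussQ (Real.sqrt (β * y))) :=
    (gaussQ_cont.comp (Real.continuous_sqrt.comp (continuous_const.mul continuous_id))).neg
  have hderiv : ∀ x ∈ Set.Ioi y, HasDerivAt (fun y => -gaussQ (Real.sqrt (β * y))) (gfun β x) x :=
    fun x hx => Gderiv hβ (lt_of_le_of_lt hy hx)
  have htend : Tendsto (fun y => -gaussQ (Real.sqrt (β * y))) atTop (𝓝 0) := by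
    have := (gaussQ_tendsto.comp (sqrt_tendsto_atTop.comp
      (Filter.Tendsto.const_mul_atTop hβ tendsto_id))).neg
    simpa using this
  refine ⟨integrableOn_Ioi_deriv_of_nonneg hcont.continuousWithinAt hderiv
      (fun x _ => gfun_nonneg β x) htend, ?_⟩
  rw [integral_Ioi_of_hasDerivAt_of_nonneg hcont.continuousWithinAt hderiv
      (fun x _ => gfun_nonneg β x) htend]
  simp

lemma gaussQ_nonneg (s : ℝ) : 0 ≤ gaussQ s :=
  setIntegral_nonneg measurableSet_Ioi fun t _ => phi_nonneg t

lemma gfun_meas (β : ℝ) : Measurable (gfun β) := by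
  unfold gfun
  have h1 : Measurable fun x : ℝ => β / (8 * Real.pi * x) :=
    measurable_const.div (measurable_const.mul measurable_id)
  exact (Real.continuous_sqrt.measurable.comp h1).mul
    (Real.measurable_exp.comp ((measurable_const.mul measurable_id).neg.div_const 2))

theorem stmt_9 {Ω : Type*} [MeasureSpace Ω] [IsProbabilityMeasure (ℙ : Measure Ω)]
    (γ : Ω → ℝ) (hγmeas : Measurable γ) (hγnonneg : ∀ ω, 0 ≤ γ ω)
    (β : ℝ) (hβ : 0 < β) :
    ∫ ω, gaussQ (Real.sqrt (β * γ ω)) ∂ℙ =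
      ∫ x in Set.Ioi (0 : ℝ),
        Real.sqrt (β / (8 * Real.pi * x)) * Real.exp (-(β * x) / 2) *
          (ℙ {ω | γ ω ≤ x}).toReal := by
  classical
  set F2 : Ω × ℝ → ℝ≥0∞ :=
    {p : Ω × ℝ | γ p.1 < p.2}.indicator (fun p => ENNReal.ofReal (gfun β p.2)) with hF2
  have hF2meas : Measurable F2 :=
    Measurable.indicator (ENNReal.measurable_ofReal.comp ((gfun_meas β).comp measurable_snd))
      (measurableSet_lt (hγmeas.comp measurable_fst) measurable_snd)
  -- LHS as a lintegral
  have hLHS : ∫ ω, gaussQ (Real.sqrt (β * γ ω)) ∂ℙ =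
      (∫⁻ ω, ENNReal.ofReal (gaussQ (Real.sqrt (β * γ ω))) ∂ℙ).toReal := by
    rw [integral_eq_lintegral_of_nonneg_ae]
    · exact ae_of_all _ fun ω => gaussQ_nonneg _
    · exact ((gaussQ_cont.comp (Real.continuous_sqrt.comp
        (continuous_const.mul continuous_id))).measurable.comp hγmeas).aestronglyMeasurable
  -- pointwise identity
  have hpt : ∀ ω, ENNReal.ofReal (gaussQ (Real.sqrt (β * γ ω))) =
      ∫⁻ x in Set.Ioi (0:ℝ), F2 (ω, x) := by
    intro ω
    rw [← (integral_gfun hβ (hγnonneg ω)).2,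
      MeasureTheory.ofReal_integral_eq_lintegral_ofReal (integral_gfun hβ (hγnonneg ω)).1
        (ae_of_all _ fun x => gfun_nonneg β x)]
    have h1 : ∀ x, F2 (ω, x) = (Set.Ioi (γ ω)).indicator
        (fun x => ENNReal.ofReal (gfun β x)) x := by
      intro x
      by_cases h : γ ω < x <;> simp [hF2, Set.indicator, h, Set.mem_Ioi]
    rw [lintegral_congr h1, lintegral_indicator measurableSet_Ioi,
      Measure.restrict_restrict measurableSet_Ioi, Set.Ioi_inter_Ioi,
      max_eq_left (hγnonneg ω)]
  -- Tonelli swap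
  have hswap : ∫⁻ ω, ∫⁻ x in Set.Ioi (0:ℝ), F2 (ω, x) ∂ℙ =
      ∫⁻ x in Set.Ioi (0:ℝ), ∫⁻ ω, F2 (ω, x) ∂ℙ := by
    exact lintegral_lintegral_swap (hF2meas.aemeasurable)
  -- inner integral
  have hinner : ∀ x : ℝ, ∫⁻ ω, F2 (ω, x) ∂ℙ =
      ENNReal.ofReal (gfun β x) * ℙ {ω | γ ω < x} := by
    intro x
    have h1 : ∀ ω, F2 (ω, x) = ({ω : Ω | γ ω < x}).indicator
        (fun _ => ENNReal.ofReal (gfun β x)) ω := by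
      intro ω
      by_cases h : γ ω < x <;> simp [hF2, Set.indicator, h]
    have hms : MeasurableSet {ω : Ω | γ ω < x} := hγmeas measurableSet_Iio
    rw [lintegral_congr h1, lintegral_indicator_const hms]
  -- a.e. equality of lt/le probabilities
  have hae : (fun x : ℝ => ENNReal.ofReal (gfun β x) * ℙ {ω | γ ω < x})
      =ᵐ[volume.restrict (Set.Ioi (0:ℝ))]
      (fun x => ENNReal.ofReal (gfun β x) * ℙ {ω | γ ω ≤ x}) := by
    have hcnt : {x : ℝ | ℙ {ω | x ≤ γ ω} ≠ ℙ {ω | x < γ ω}}.Countable :=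
      MeasureTheory.countable_meas_le_ne_meas_lt ℙ γ
    have h0 : ∀ᵐ x : ℝ, ℙ {ω | x ≤ γ ω} = ℙ {ω | x < γ ω} := by
      have := hcnt.measure_zero (volume : Measure ℝ)
      rw [ae_iff]
      simpa using this
    refine ae_restrict_of_ae ?_
    filter_upwards [h0] with x hx
    have hle : ℙ {ω | γ ω ≤ x} = 1 - ℙ {ω | x < γ ω} := by
      rw [← prob_compl_eq_one_sub (show MeasurableSet {ω : Ω | x < γ ω} from
        hγmeas measurableSet_Ioi)]
      congr 1
      ext ω; simp [not_lt]
    have hlt : ℙ {ω | γ ω < x} = 1 - ℙ {ω | x ≤ γ ω} := by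
      rw [← prob_compl_eq_one_sub (show MeasurableSet {ω : Ω | x ≤ γ ω} from
        hγmeas measurableSet_Ici)]
      congr 1
      ext ω; simp [not_le]
    rw [hle, hlt, hx]
  -- RHS as a lintegral
  have hRHS : ∫ x in Set.Ioi (0:ℝ),
        Real.sqrt (β / (8 * Real.pi * x)) * Real.exp (-(β * x) / 2) *
          (ℙ {ω | γ ω ≤ x}).toReal =
      (∫⁻ x in Set.Ioi (0:ℝ),
        ENNReal.ofReal (gfun β x) * ℙ {ω | γ ω ≤ x}).toReal := by
    have hFmono : Monotone fun x : ℝ => (ℙ {ω | γ ω ≤ x}).toReal := by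
      intro a b hab
      exact ENNReal.toReal_mono (measure_ne_top _ _)
        (measure_mono fun ω h => le_trans h hab)
    rw [integral_eq_lintegral_of_nonneg_ae]
    · congr 1
      refine lintegral_congr fun x => ?_
      rw [show Real.sqrt (β / (8 * Real.pi * x)) * Real.exp (-(β * x) / 2) *
          (ℙ {ω | γ ω ≤ x}).toReal = gfun β x * (ℙ {ω | γ ω ≤ x}).toReal from rfl,
        ENNReal.ofReal_mul (gfun_nonneg β x), ENNReal.ofReal_toReal (measure_ne_top _ _)]
    · exact ae_of_all _ fun x => mul_nonneg (gfun_nonneg β x) ENNReal.toReal_nonneg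
    · exact ((gfun_meas β).mul hFmono.measurable).aestronglyMeasurable
  rw [hLHS, hRHS]
  congr 1
  calc ∫⁻ ω, ENNReal.ofReal (gaussQ (Real.sqrt (β * γ ω))) ∂ℙ
      = ∫⁻ ω, ∫⁻ x in Set.Ioi (0:ℝ), F2 (ω, x) ∂ℙ := lintegral_congr hpt
    _ = ∫⁻ x in Set.Ioi (0:ℝ), ∫⁻ ω, F2 (ω, x) ∂ℙ := hswap
    _ = ∫⁻ x in Set.Ioi (0:ℝ), ENNReal.ofReal (gfun β x) * ℙ {ω | γ ω < x} :=
        lintegral_congr fun x => hinner x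
    _ = ∫⁻ x in Set.Ioi (0:ℝ), ENNReal.ofReal (gfun β x) * ℙ {ω | γ ω ≤ x} :=
        lintegral_congr_ae hae
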